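/- If φ : G → G is a graph automorphism of a finite simple graph G with adjacency matrix A, then for every vertex v, the (v,v) entry of |A| equals the (φ(v),φ(v)) entry of |A|. In particular, vertex energy is invariant under graph automorphisms. -/

import Mathlib

theorem vertex_energy_invariant_under_automorphism {V : Type*} [Fintype V] [DecidableEq V]
    (G : SimpleGraph V) [DecidableRel G.Adj] (φ : G ≃g G)
    (B : Matrix V V ℝ) (hB : B.PosSemidef) (hBB : B * B = G.adjMatrix ℝ ^ 2) :
    ∀ v, B v v = B (φ v) (φ v) := by
  have hA : (G.adjMatrix ℝ).submatrix φ φ = G.adjMatrix ℝ := by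
    ext i j
    simp [Matrix.submatrix_apply, SimpleGraph.adjMatrix_apply, φ.map_adj_iff]
  have hC : (B.submatrix φ φ).PosSemidef := hB.submatrix φ
  have hCC : (B.submatrix φ φ) ^ 2 = B ^ 2 := by
    have he : (⇑φ : V → V) = ⇑φ.toEquiv := rfl
    rw [pow_two, pow_two, he, Matrix.submatrix_mul_equiv B B (⇑φ.toEquiv) φ.toEquiv (⇑φ.toEquiv), hBB, pow_two,
      ← Matrix.submatrix_mul_equiv _ _ (⇑φ.toEquiv) φ.toEquiv (⇑φ.toEquiv), ← he, hA]
  have := by open scoped MatrixOrder in exact (CFC.sq_eq_sq_iff _ _ hC.nonneg hB.nonneg).mp hCC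
  intro v
  calc B v v = (B.submatrix φ φ) v v := by rw [this]
    _ = B (φ v) (φ v) := rfl
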